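/- Assume k ≥ 2. A vector x ∈ ℝᵏ belongs to the clique-kernel ck(Sp) = ker(Rᵀ) ∩ range((I − J)⁻¹·R) if and only if there exists y ∈ ℝˢ such that A·(x, y) = 0. -/

import Mathlib

open Matrix

/-- For `k ≥ 2`, a vector `x ∈ ℝᵏ` belongs to the clique-kernel
`ck(Sp) = ker(Rᵀ) ∩ range((I - J)⁻¹ R)` iff there exists `y ∈ ℝˢ` with
`A (x, y) = 0`. -/
theorem stmt_5 (k s : ℕ) (hk : 2 ≤ k)
    (R : Matrix (Fin k) (Fin s) ℝ) (hR01 : ∀ i j, R i j = 0 ∨ R i j = 1)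
    (J : Matrix (Fin k) (Fin k) ℝ) (hJ : ∀ i j, J i j = 1)
    (A : Matrix (Fin k ⊕ Fin s) (Fin k ⊕ Fin s) ℝ)
    (hA : A = Matrix.fromBlocks (J - 1) R Rᵀ 0)
    (x : Fin k → ℝ) :
    (Matrix.mulVec Rᵀ x = 0 ∧ ∃ w : Fin s → ℝ, ((1 - J)⁻¹ * R).mulVec w = x) ↔
      ∃ y : Fin s → ℝ, A.mulVec (Sum.elim x y) = 0 := by
  -- J as a rank-one matrix
  have hJcr : J = replicateCol (Fin 1) (fun _ => (1:ℝ)) * replicateRow (Fin 1) (fun _ => (1:ℝ)) := by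
    ext i j
    simp [Matrix.mul_apply, hJ, Matrix.replicateCol, Matrix.replicateRow]
  have hdet : IsUnit (1 - J).det := by
    have : (1 - J).det = 1 + (fun _ : Fin k => (-1:ℝ)) ⬝ᵥ (fun _ : Fin k => (1:ℝ)) := by
      rw [show (1 : Matrix (Fin k) (Fin k) ℝ) - J
          = 1 + replicateCol (Fin 1) (fun _ => (1:ℝ)) * replicateRow (Fin 1) (fun _ => (-1:ℝ)) by
        rw [sub_eq_add_neg, hJcr]
        congr 1
        ext i j
        simp [Matrix.mul_apply, Matrix.replicateCol, Matrix.replicateRow]]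
      exact Matrix.det_one_add_replicateCol_mul_replicateRow _ _
    rw [this]
    have : (fun _ : Fin k => (-1:ℝ)) ⬝ᵥ (fun _ : Fin k => (1:ℝ)) = -(k:ℝ) := by
      simp [dotProduct]
    rw [this]
    have hk' : (1:ℝ) + -(k:ℝ) ≠ 0 := by
      have : (2:ℝ) ≤ (k:ℝ) := by exact_mod_cast hk
      linarith
    exact isUnit_iff_ne_zero.mpr hk'
  have hinv : ∀ v : Fin k → ℝ, (1 - J)⁻¹.mulVec v = x ↔ v = (1 - J).mulVec x := by
    intro v
    constructor
    · intro h
      rw [← h, Matrix.mulVec_mulVec, Matrix.mul_nonsing_inv _ hdet, Matrix.one_mulVec]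
    · intro h
      rw [h, Matrix.mulVec_mulVec, Matrix.nonsing_inv_mul _ hdet, Matrix.one_mulVec]
  constructor
  · rintro ⟨h1, w, hw⟩
    refine ⟨w, ?_⟩
    rw [hA, Matrix.fromBlocks_mulVec]
    rw [← Matrix.mulVec_mulVec] at hw
    have h2 : R.mulVec w = (1 - J).mulVec x := (hinv _).mp hw
    ext (i | i)
    · have : (J - 1).mulVec x + R.mulVec w = 0 := by
        rw [h2, ← Matrix.add_mulVec]
        simp
      simpa using congrFun this i
    · have : Rᵀ.mulVec x + (0 : Matrix (Fin s) (Fin s) ℝ).mulVec w = 0 := by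
        simp [h1]
      simpa using congrFun this i
  · rintro ⟨y, hy⟩
    rw [hA, Matrix.fromBlocks_mulVec] at hy
    have h1 : (J - 1).mulVec x + R.mulVec y = 0 := by
      ext i; exact congrFun hy (Sum.inl i)
    have h2 : Rᵀ.mulVec x = 0 := by
      ext i
      have := congrFun hy (Sum.inr i)
      simpa using this
    refine ⟨h2, y, ?_⟩
    rw [← Matrix.mulVec_mulVec]
    apply (hinv _).mpr
    have : R.mulVec y = -((J - 1).mulVec x) := by linear_combination (norm := module) h1
    rw [this, ← Matrix.neg_mulVec]
    congr 1
    abel
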